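/- Let a(n,k,s) be the number of k-chains in E*_n whose elements all have signature at most s. For all n >= 3, s >= 1, and all k: a(n,k,s) = a(n-1,k,s-1) + a(n-1,k,s+1) - a(n-2,k,s) + a(n-1,k-1,s-1) + a(n-1,k-1,s+1) - a(n-2,k-1,s). -/

import Mathlib

/-- `chainA n k s` is the number of `k`-element chains in
`E*_n = {(a,b) : 1 ≤ a+b ≤ n}` all of whose elements have signature `a - b` at most `s`;
it is `0` for `k < 0` or `s < 0`. -/
noncomputable def chainA (n : ℕ) (k s : ℤ) : ℕ :=
  if k < 0 ∨ s < 0 then 0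
  else Nat.card {S : Finset (ℕ × ℕ) // S.card = k.toNat ∧
    (∀ p ∈ S, 1 ≤ p.1 + p.2 ∧ p.1 + p.2 ≤ n) ∧
    IsChain (· ≤ ·) (S : Set (ℕ × ℕ)) ∧
    (∀ p ∈ S, (p.1 : ℤ) - (p.2 : ℤ) ≤ s)}

namespace ChainAux

open Finset

/-- The defining property: a `k`-chain in the region. -/
def OkP (n s : ℕ) (S : Finset (ℕ × ℕ)) : Prop :=
  (∀ p ∈ S, 1 ≤ p.1 + p.2 ∧ p.1 + p.2 ≤ n) ∧
  IsChain (· ≤ ·) (S : Set (ℕ × ℕ)) ∧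
  (∀ p ∈ S, (p.1 : ℤ) - (p.2 : ℤ) ≤ (s : ℤ))

open Classical in
/-- The finset of `k`-chains in `A(n,s)`. -/
noncomputable def cset (n k s : ℕ) : Finset (Finset (ℕ × ℕ)) :=
  ((Finset.range (n+1) ×ˢ Finset.range (n+1)).powerset).filter
    (fun S => S.card = k ∧ OkP n s S)

open Classical in
/-- Chains containing a point on the positive x-axis. -/
noncomputable def csetAx (n k s : ℕ) : Finset (Finset (ℕ × ℕ)) :=
  (cset n k s).filter (fun S => ∃ p ∈ S, p.2 = 0)

lemma mem_cset {n k s : ℕ} {S : Finset (ℕ × ℕ)} :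
    S ∈ cset n k s ↔ S.card = k ∧ OkP n s S := by
  classical
  simp only [cset, mem_filter, mem_powerset, and_iff_right_iff_imp]
  rintro ⟨hk, hsum, -, -⟩
  intro p hp
  have := hsum p hp
  simp only [mem_product, mem_range]
  omega

end ChainAux
namespace ChainAux

open Finset

/-- shift down -/
def dn (p : ℕ × ℕ) : ℕ × ℕ := (p.1, p.2 - 1)
/-- shift up -/
def up (p : ℕ × ℕ) : ℕ × ℕ := (p.1, p.2 + 1)
/-- shift left -/
def lf (p : ℕ × ℕ) : ℕ × ℕ := (p.1 - 1, p.2)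
/-- shift right -/
def rt (p : ℕ × ℕ) : ℕ × ℕ := (p.1 + 1, p.2)

lemma mono_dn : ∀ x y : ℕ × ℕ, x ≤ y → dn x ≤ dn y := by
  intro x y h; simp only [Prod.le_def, dn] at *; omega
lemma mono_up : ∀ x y : ℕ × ℕ, x ≤ y → up x ≤ up y := by
  intro x y h; simp only [Prod.le_def, up] at *; omega
lemma mono_lf : ∀ x y : ℕ × ℕ, x ≤ y → lf x ≤ lf y := by
  intro x y h; simp only [Prod.le_def, lf] at *; omega
lemma mono_rt : ∀ x y : ℕ × ℕ, x ≤ y → rt x ≤ rt y := by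
  intro x y h; simp only [Prod.le_def, rt] at *; omega

lemma chain_image {S : Finset (ℕ × ℕ)} (h : IsChain (· ≤ ·) (S : Set (ℕ × ℕ)))
    {f : ℕ × ℕ → ℕ × ℕ} (hf : ∀ x y : ℕ × ℕ, x ≤ y → f x ≤ f y) :
    IsChain (· ≤ ·) ((S.image f : Finset (ℕ × ℕ)) : Set (ℕ × ℕ)) := by
  rw [Finset.coe_image]
  exact h.image_of_map_rel (· ≤ ·) (· ≤ ·) f hf

lemma OkP.cmp {n s : ℕ} {S : Finset (ℕ × ℕ)} (h : OkP n s S) {p q : ℕ × ℕ}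
    (hp : p ∈ S) (hq : q ∈ S) : p ≤ q ∨ q ≤ p := by
  rcases eq_or_ne p q with rfl | hne
  · exact Or.inl le_rfl
  · exact h.2.1 hp hq hne

open Classical in
/-- B1 : chains with no axis point and not containing (0,1) ↔ chains in A(n-1,s+1). -/
lemma card_B1 (n k s : ℕ) (hn : 1 ≤ n) :
    ((cset n k s).filter (fun S => (∀ p ∈ S, p.2 ≠ 0) ∧ (0,1) ∉ S)).card
      = (cset (n-1) k (s+1)).card := by
  apply Finset.card_nbij' (i := fun S => S.image dn) (j := fun T => T.image up)
  · -- forward membership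
    intro S hS
    simp only [Finset.mem_coe] at hS ⊢
    rw [mem_filter, mem_cset] at hS
    obtain ⟨⟨hcard, hsum, hchain, hsig⟩, hax, h01⟩ := hS
    have hsum2 : ∀ p ∈ S, 2 ≤ p.1 + p.2 := by
      intro p hp
      have h1 := hsum p hp
      have h2 := hax p hp
      by_contra hlt
      exact h01 (by
        have : p = (0,1) := by
          apply Prod.ext <;> simp <;> omega
        rwa [this] at hp)
    rw [mem_cset]
    refine ⟨?_, ?_, chain_image hchain mono_dn, ?_⟩
    · rw [Finset.card_image_of_injOn, hcard]
      intro p hp q hq hpq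
      simp only [dn, Prod.mk.injEq] at hpq
      have := hax p hp; have := hax q hq
      apply Prod.ext <;> omega
    · intro q hq
      simp only [Finset.mem_image] at hq
      obtain ⟨p, hp, rfl⟩ := hq
      have := hsum2 p hp; have := (hsum p hp).2; have := hax p hp
      simp only [dn]; omega
    · intro q hq
      simp only [Finset.mem_image] at hq
      obtain ⟨p, hp, rfl⟩ := hq
      have := hsig p hp; have := hax p hp
      simp only [dn]; push_cast; omega
  · -- backward membership
    intro T hT
    simp only [Finset.mem_coe] at hT ⊢
    rw [mem_cset] at hT
    obtain ⟨hcard, hsum, hchain, hsig⟩ := hT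
    rw [mem_filter, mem_cset]
    refine ⟨⟨?_, ?_, chain_image hchain mono_up, ?_⟩, ?_, ?_⟩
    · rw [Finset.card_image_of_injOn, hcard]
      intro p _ q _ hpq
      simp only [up, Prod.mk.injEq] at hpq
      exact Prod.ext hpq.1 (by omega)
    · intro q hq
      simp only [Finset.mem_image] at hq
      obtain ⟨p, hp, rfl⟩ := hq
      have := hsum p hp
      simp only [up]; omega
    · intro q hq
      simp only [Finset.mem_image] at hq
      obtain ⟨p, hp, rfl⟩ := hq
      have := hsig p hp
      simp only [up]; push_cast at *; omega
    · intro q hq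
      simp only [Finset.mem_image] at hq
      obtain ⟨p, hp, rfl⟩ := hq
      simp [up]
    · intro hmem
      simp only [Finset.mem_image] at hmem
      obtain ⟨p, hp, hpq⟩ := hmem
      simp only [up, Prod.mk.injEq] at hpq
      have := (hsum p hp).1
      omega
  · -- left inverse
    intro S hS
    rw [Finset.mem_coe] at hS
    dsimp only
    rw [mem_filter, mem_cset] at hS
    rw [Finset.image_image]
    have : Set.EqOn (up ∘ dn) id (S : Set (ℕ × ℕ)) := by
      intro p hp
      have := hS.2.1 p hp
      simp only [up, dn, Function.comp_apply, id_eq]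
      apply Prod.ext <;> simp <;> omega
    rw [Finset.image_congr this, Finset.image_id]
  · -- right inverse
    intro T _
    dsimp only
    rw [Finset.image_image]
    have : Set.EqOn (dn ∘ up) id (T : Set (ℕ × ℕ)) := by
      intro p _
      simp [up, dn]
    rw [Finset.image_congr this, Finset.image_id]

end ChainAux
namespace ChainAux
open Finset

open Classical in
/-- B2 : chains with no axis point containing (0,1) ↔ (k-1)-chains in A(n-1,s+1). -/
lemma card_B2 (n k s : ℕ) (hn : 1 ≤ n) (hk : 1 ≤ k) :
    ((cset n k s).filter (fun S => (∀ p ∈ S, p.2 ≠ 0) ∧ (0,1) ∈ S)).card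
      = (cset (n-1) (k-1) (s+1)).card := by
  apply Finset.card_nbij' (i := fun S => (S.erase (0,1)).image dn)
    (j := fun T => insert (0,1) (T.image up))
  · -- forward membership
    intro S hS
    simp only [Finset.mem_coe] at hS ⊢
    rw [mem_filter, mem_cset] at hS
    obtain ⟨⟨hcard, hsum, hchain, hsig⟩, hax, h01⟩ := hS
    have hkey : ∀ p ∈ S.erase (0,1), p.2 ≠ 0 ∧ 2 ≤ p.1 + p.2 ∧ p.1 + p.2 ≤ n := by
      intro p hp
      rw [Finset.mem_erase] at hp
      have h1 := hsum p hp.2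
      have h2 := hax p hp.2
      refine ⟨h2, ?_, h1.2⟩
      by_contra hlt
      exact hp.1 (by apply Prod.ext <;> simp <;> omega)
    have hchain' : IsChain (· ≤ ·) ((S.erase (0,1) : Finset (ℕ × ℕ)) : Set (ℕ × ℕ)) :=
      hchain.mono (by rw [Finset.coe_subset]; exact Finset.erase_subset _ _)
    rw [mem_cset]
    refine ⟨?_, ?_, chain_image hchain' mono_dn, ?_⟩
    · rw [Finset.card_image_of_injOn, Finset.card_erase_of_mem h01, hcard]
      intro p hp q hq hpq
      simp only [dn, Prod.mk.injEq] at hpq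
      have := (hkey p hp).1; have := (hkey q hq).1
      apply Prod.ext <;> omega
    · intro q hq
      simp only [Finset.mem_image] at hq
      obtain ⟨p, hp, rfl⟩ := hq
      have := hkey p hp
      simp only [dn]; omega
    · intro q hq
      simp only [Finset.mem_image] at hq
      obtain ⟨p, hp, rfl⟩ := hq
      have h1 := hsig p (Finset.mem_of_mem_erase hp)
      have := (hkey p hp).1
      simp only [dn]; push_cast; omega
  · -- backward membership
    intro T hT
    simp only [Finset.mem_coe] at hT ⊢
    rw [mem_cset] at hT
    obtain ⟨hcard, hsum, hchain, hsig⟩ := hT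
    have h01 : (0,1) ∉ T.image up := by
      intro hmem
      simp only [Finset.mem_image] at hmem
      obtain ⟨p, hp, hpq⟩ := hmem
      simp only [up, Prod.mk.injEq] at hpq
      have := (hsum p hp).1
      omega
    rw [mem_filter, mem_cset]
    have hchainI : IsChain (· ≤ ·) ((T.image up : Finset (ℕ × ℕ)) : Set (ℕ × ℕ)) :=
      chain_image hchain mono_up
    refine ⟨⟨?_, ?_, ?_, ?_⟩, ?_, Finset.mem_insert_self _ _⟩
    · rw [Finset.card_insert_of_notMem h01, Finset.card_image_of_injOn, hcard]
      · omega
      · intro p _ q _ hpq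
        simp only [up, Prod.mk.injEq] at hpq
        exact Prod.ext hpq.1 (by omega)
    · intro q hq
      rw [Finset.mem_insert] at hq
      rcases hq with rfl | hq
      · simp; omega
      · simp only [Finset.mem_image] at hq
        obtain ⟨p, hp, rfl⟩ := hq
        have := hsum p hp
        simp only [up]; omega
    · rw [Finset.coe_insert]
      apply hchainI.insert
      intro b hb _
      left
      simp only [Finset.coe_image, Set.mem_image] at hb
      obtain ⟨p, _, rfl⟩ := hb
      simp [up, Prod.le_def]
    · intro q hq
      rw [Finset.mem_insert] at hq
      rcases hq with rfl | hq
      · simp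
      · simp only [Finset.mem_image] at hq
        obtain ⟨p, hp, rfl⟩ := hq
        have := hsig p hp
        simp only [up]; push_cast at *; omega
    · intro q hq
      rw [Finset.mem_insert] at hq
      rcases hq with rfl | hq
      · simp
      · simp only [Finset.mem_image] at hq
        obtain ⟨p, _, rfl⟩ := hq
        simp [up]
  · -- left inverse
    intro S hS
    rw [Finset.mem_coe] at hS
    dsimp only
    rw [mem_filter, mem_cset] at hS
    obtain ⟨⟨hcard, hsum, hchain, hsig⟩, hax, h01⟩ := hS
    rw [Finset.image_image]
    have : Set.EqOn (up ∘ dn) id ((S.erase (0,1) : Finset (ℕ × ℕ)) : Set (ℕ × ℕ)) := by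
      intro p hp
      rw [Finset.mem_coe, Finset.mem_erase] at hp
      have := hax p hp.2
      simp only [up, dn, Function.comp_apply, id_eq]
      apply Prod.ext <;> simp <;> omega
    rw [Finset.image_congr this, Finset.image_id, Finset.insert_erase h01]
  · -- right inverse
    intro T hT
    rw [Finset.mem_coe] at hT
    dsimp only
    rw [mem_cset] at hT
    have h01 : (0,1) ∉ T.image up := by
      intro hmem
      simp only [Finset.mem_image] at hmem
      obtain ⟨p, hp, hpq⟩ := hmem
      simp only [up, Prod.mk.injEq] at hpq
      have := (hT.2.1 p hp).1
      omega
    rw [Finset.erase_insert h01, Finset.image_image]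
    have : Set.EqOn (dn ∘ up) id ((T : Finset (ℕ × ℕ)) : Set (ℕ × ℕ)) := by
      intro p _
      simp [up, dn]
    rw [Finset.image_congr this, Finset.image_id]
end ChainAux
namespace ChainAux
open Finset

open Classical in
/-- B3 : chains containing (1,0) ↔ (k-1)-chains in A(n-1,s-1). -/
lemma card_B3 (n k s : ℕ) (hn : 1 ≤ n) (hk : 1 ≤ k) (hs : 1 ≤ s) :
    ((cset n k s).filter (fun S => (1,0) ∈ S)).card
      = (cset (n-1) (k-1) (s-1)).card := by
  apply Finset.card_nbij' (i := fun S => (S.erase (1,0)).image lf)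
    (j := fun T => insert (1,0) (T.image rt))
  · -- forward membership
    intro S hS
    simp only [Finset.mem_coe] at hS ⊢
    rw [mem_filter, mem_cset] at hS
    obtain ⟨⟨hcard, hsum, hchain, hsig⟩, h10⟩ := hS
    have hOk : OkP n s S := ⟨hsum, hchain, hsig⟩
    have hge : ∀ p ∈ S, 1 ≤ p.1 := by
      intro p hp
      rcases hOk.cmp hp h10 with h | h
      · have h1 := (hsum p hp).1
        rw [Prod.le_def] at h; omega
      · rw [Prod.le_def] at h; omega
    have hkey : ∀ p ∈ S.erase (1,0), 1 ≤ p.1 ∧ 2 ≤ p.1 + p.2 ∧ p.1 + p.2 ≤ n := by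
      intro p hp
      rw [Finset.mem_erase] at hp
      have h1 := hsum p hp.2
      have h2 := hge p hp.2
      refine ⟨h2, ?_, h1.2⟩
      by_contra hlt
      exact hp.1 (by apply Prod.ext <;> simp <;> omega)
    have hchain' : IsChain (· ≤ ·) ((S.erase (1,0) : Finset (ℕ × ℕ)) : Set (ℕ × ℕ)) :=
      hchain.mono (by rw [Finset.coe_subset]; exact Finset.erase_subset _ _)
    rw [mem_cset]
    refine ⟨?_, ?_, chain_image hchain' mono_lf, ?_⟩
    · rw [Finset.card_image_of_injOn, Finset.card_erase_of_mem h10, hcard]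
      intro p hp q hq hpq
      simp only [lf, Prod.mk.injEq] at hpq
      have := (hkey p hp).1; have := (hkey q hq).1
      apply Prod.ext <;> omega
    · intro q hq
      simp only [Finset.mem_image] at hq
      obtain ⟨p, hp, rfl⟩ := hq
      have := hkey p hp
      simp only [lf]; omega
    · intro q hq
      simp only [Finset.mem_image] at hq
      obtain ⟨p, hp, rfl⟩ := hq
      have h1 := hsig p (Finset.mem_of_mem_erase hp)
      have := (hkey p hp).1
      simp only [lf]; push_cast; omega
  · -- backward membership
    intro T hT
    simp only [Finset.mem_coe] at hT ⊢
    rw [mem_cset] at hT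
    obtain ⟨hcard, hsum, hchain, hsig⟩ := hT
    have h10 : (1,0) ∉ T.image rt := by
      intro hmem
      simp only [Finset.mem_image] at hmem
      obtain ⟨p, hp, hpq⟩ := hmem
      simp only [rt, Prod.mk.injEq] at hpq
      have := (hsum p hp).1
      omega
    rw [mem_filter, mem_cset]
    have hchainI : IsChain (· ≤ ·) ((T.image rt : Finset (ℕ × ℕ)) : Set (ℕ × ℕ)) :=
      chain_image hchain mono_rt
    refine ⟨⟨?_, ?_, ?_, ?_⟩, Finset.mem_insert_self _ _⟩
    · rw [Finset.card_insert_of_notMem h10, Finset.card_image_of_injOn, hcard]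
      · omega
      · intro p _ q _ hpq
        simp only [rt, Prod.mk.injEq] at hpq
        exact Prod.ext (by omega) hpq.2
    · intro q hq
      rw [Finset.mem_insert] at hq
      rcases hq with rfl | hq
      · simp; omega
      · simp only [Finset.mem_image] at hq
        obtain ⟨p, hp, rfl⟩ := hq
        have := hsum p hp
        simp only [rt]; omega
    · rw [Finset.coe_insert]
      apply hchainI.insert
      intro b hb _
      left
      simp only [Finset.coe_image, Set.mem_image] at hb
      obtain ⟨p, _, rfl⟩ := hb
      simp [rt, Prod.le_def]
    · intro q hq
      rw [Finset.mem_insert] at hq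
      rcases hq with rfl | hq
      · simp; push_cast; omega
      · simp only [Finset.mem_image] at hq
        obtain ⟨p, hp, rfl⟩ := hq
        have := hsig p hp
        simp only [rt]; push_cast at *; omega
  · -- left inverse
    intro S hS
    rw [Finset.mem_coe] at hS
    dsimp only
    rw [mem_filter, mem_cset] at hS
    obtain ⟨⟨hcard, hsum, hchain, hsig⟩, h10⟩ := hS
    have hOk : OkP n s S := ⟨hsum, hchain, hsig⟩
    have hge : ∀ p ∈ S, 1 ≤ p.1 := by
      intro p hp
      rcases hOk.cmp hp h10 with h | h
      · have h1 := (hsum p hp).1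
        rw [Prod.le_def] at h; omega
      · rw [Prod.le_def] at h; omega
    rw [Finset.image_image]
    have : Set.EqOn (rt ∘ lf) id ((S.erase (1,0) : Finset (ℕ × ℕ)) : Set (ℕ × ℕ)) := by
      intro p hp
      rw [Finset.mem_coe, Finset.mem_erase] at hp
      have := hge p hp.2
      simp only [rt, lf, Function.comp_apply, id_eq]
      apply Prod.ext <;> simp <;> omega
    rw [Finset.image_congr this, Finset.image_id, Finset.insert_erase h10]
  · -- right inverse
    intro T hT
    rw [Finset.mem_coe] at hT
    dsimp only
    rw [mem_cset] at hT
    have h10 : (1,0) ∉ T.image rt := by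
      intro hmem
      simp only [Finset.mem_image] at hmem
      obtain ⟨p, hp, hpq⟩ := hmem
      simp only [rt, Prod.mk.injEq] at hpq
      have := (hT.2.1 p hp).1
      omega
    rw [Finset.erase_insert h10, Finset.image_image]
    have : Set.EqOn (lf ∘ rt) id ((T : Finset (ℕ × ℕ)) : Set (ℕ × ℕ)) := by
      intro p _
      simp [rt, lf]
    rw [Finset.image_congr this, Finset.image_id]

open Classical in
/-- B4 : chains with an axis point but not (1,0) ↔ axis chains in A(n-1,s-1). -/
lemma card_B4 (n k s : ℕ) (hn : 1 ≤ n) (hs : 1 ≤ s) :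
    ((cset n k s).filter (fun S => (∃ p ∈ S, p.2 = 0) ∧ (1,0) ∉ S)).card
      = (csetAx (n-1) k (s-1)).card := by
  apply Finset.card_nbij' (i := fun S => S.image lf) (j := fun T => T.image rt)
  · -- forward membership
    intro S hS
    simp only [Finset.mem_coe] at hS ⊢
    rw [mem_filter, mem_cset] at hS
    obtain ⟨⟨hcard, hsum, hchain, hsig⟩, ⟨q, hq, hq0⟩, h10⟩ := hS
    have hOk : OkP n s S := ⟨hsum, hchain, hsig⟩
    have hge : ∀ p ∈ S, 1 ≤ p.1 := by
      intro p hp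
      rcases hOk.cmp hp hq with h | h
      · have h1 := (hsum p hp).1
        rw [Prod.le_def] at h; omega
      · have h1 := (hsum q hq).1
        rw [Prod.le_def] at h; omega
    have hkey : ∀ p ∈ S, 1 ≤ p.1 ∧ 2 ≤ p.1 + p.2 ∧ p.1 + p.2 ≤ n := by
      intro p hp
      have h1 := hsum p hp
      have h2 := hge p hp
      refine ⟨h2, ?_, h1.2⟩
      by_contra hlt
      exact h10 (by
        have : p = (1,0) := by apply Prod.ext <;> simp <;> omega
        rwa [this] at hp)
    rw [csetAx, mem_filter, mem_cset]
    refine ⟨⟨?_, ?_, chain_image hchain mono_lf, ?_⟩, ?_⟩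
    · rw [Finset.card_image_of_injOn, hcard]
      intro p hp q' hq' hpq
      simp only [lf, Prod.mk.injEq] at hpq
      have := (hkey p hp).1; have := (hkey q' hq').1
      apply Prod.ext <;> omega
    · intro q' hq'
      simp only [Finset.mem_image] at hq'
      obtain ⟨p, hp, rfl⟩ := hq'
      have := hkey p hp
      simp only [lf]; omega
    · intro q' hq'
      simp only [Finset.mem_image] at hq'
      obtain ⟨p, hp, rfl⟩ := hq'
      have h1 := hsig p hp
      have := (hkey p hp).1
      simp only [lf]; push_cast; omega
    · exact ⟨lf q, Finset.mem_image_of_mem _ hq, by simp [lf, hq0]⟩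
  · -- backward membership
    intro T hT
    simp only [Finset.mem_coe] at hT ⊢
    rw [csetAx, mem_filter, mem_cset] at hT
    obtain ⟨⟨hcard, hsum, hchain, hsig⟩, q, hq, hq0⟩ := hT
    rw [mem_filter, mem_cset]
    refine ⟨⟨?_, ?_, chain_image hchain mono_rt, ?_⟩, ?_, ?_⟩
    · rw [Finset.card_image_of_injOn, hcard]
      intro p _ q' _ hpq
      simp only [rt, Prod.mk.injEq] at hpq
      exact Prod.ext (by omega) hpq.2
    · intro q' hq'
      simp only [Finset.mem_image] at hq'
      obtain ⟨p, hp, rfl⟩ := hq'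
      have := hsum p hp
      simp only [rt]; omega
    · intro q' hq'
      simp only [Finset.mem_image] at hq'
      obtain ⟨p, hp, rfl⟩ := hq'
      have := hsig p hp
      simp only [rt]; push_cast at *; omega
    · exact ⟨rt q, Finset.mem_image_of_mem _ hq, by simp [rt, hq0]⟩
    · intro hmem
      simp only [Finset.mem_image] at hmem
      obtain ⟨p, hp, hpq⟩ := hmem
      simp only [rt, Prod.mk.injEq] at hpq
      have := (hsum p hp).1
      omega
  · -- left inverse
    intro S hS
    rw [Finset.mem_coe] at hS
    dsimp only
    rw [mem_filter, mem_cset] at hS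
    obtain ⟨⟨hcard, hsum, hchain, hsig⟩, ⟨q, hq, hq0⟩, h10⟩ := hS
    have hOk : OkP n s S := ⟨hsum, hchain, hsig⟩
    have hge : ∀ p ∈ S, 1 ≤ p.1 := by
      intro p hp
      rcases hOk.cmp hp hq with h | h
      · have h1 := (hsum p hp).1
        rw [Prod.le_def] at h; omega
      · have h1 := (hsum q hq).1
        rw [Prod.le_def] at h; omega
    rw [Finset.image_image]
    have : Set.EqOn (rt ∘ lf) id ((S : Finset (ℕ × ℕ)) : Set (ℕ × ℕ)) := by
      intro p hp
      rw [Finset.mem_coe] at hp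
      have := hge p hp
      simp only [rt, lf, Function.comp_apply, id_eq]
      apply Prod.ext <;> simp <;> omega
    rw [Finset.image_congr this, Finset.image_id]
  · -- right inverse
    intro T _
    dsimp only
    rw [Finset.image_image]
    have : Set.EqOn (lf ∘ rt) id ((T : Finset (ℕ × ℕ)) : Set (ℕ × ℕ)) := by
      intro p _
      simp [rt, lf]
    rw [Finset.image_congr this, Finset.image_id]
end ChainAux
namespace ChainAux
open Finset

open Classical in
lemma L1 (n k s : ℕ) (hn : 1 ≤ n) (hk : 1 ≤ k) :
    (cset n k s).card
      = (cset (n-1) k (s+1)).card + (cset (n-1) (k-1) (s+1)).card + (csetAx n k s).card := by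
  classical
  have h1 := Finset.card_filter_add_card_filter_not
    (s := cset n k s) (p := fun S => ∃ p ∈ S, p.2 = 0)
  have hneg : (cset n k s).filter (fun S => ¬ ∃ p ∈ S, p.2 = 0)
      = (cset n k s).filter (fun S => ∀ p ∈ S, p.2 ≠ 0) := by
    apply Finset.filter_congr
    intro S _
    push_neg
    rfl
  rw [hneg] at h1
  have h2 := Finset.card_filter_add_card_filter_not
    (s := (cset n k s).filter (fun S => ∀ p ∈ S, p.2 ≠ 0)) (p := fun S => (0,1) ∈ S)
  rw [Finset.filter_filter, Finset.filter_filter] at h2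
  have e1 : ((cset n k s).filter fun S => (∀ p ∈ S, p.2 ≠ 0) ∧ (0,1) ∈ S).card
      = (cset (n-1) (k-1) (s+1)).card := card_B2 n k s hn hk
  have e2 : ((cset n k s).filter fun S => (∀ p ∈ S, p.2 ≠ 0) ∧ (0,1) ∉ S).card
      = (cset (n-1) k (s+1)).card := card_B1 n k s hn
  have hax : ((cset n k s).filter (fun S => ∃ p ∈ S, p.2 = 0)).card = (csetAx n k s).card := rfl
  omega

open Classical in
lemma L2 (n k s : ℕ) (hn : 1 ≤ n) (hk : 1 ≤ k) (hs : 1 ≤ s) :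
    (csetAx n k s).card
      = (cset (n-1) (k-1) (s-1)).card + (csetAx (n-1) k (s-1)).card := by
  classical
  have h1 := Finset.card_filter_add_card_filter_not
    (s := (cset n k s).filter (fun S => ∃ p ∈ S, p.2 = 0)) (p := fun S => (1,0) ∈ S)
  rw [Finset.filter_filter, Finset.filter_filter] at h1
  have e1 : ((cset n k s).filter fun S => (∃ p ∈ S, p.2 = 0) ∧ (1,0) ∈ S)
      = (cset n k s).filter (fun S => (1,0) ∈ S) := by
    apply Finset.filter_congr
    intro S _
    constructor
    · exact And.right
    · intro h
      exact ⟨⟨(1,0), h, rfl⟩, h⟩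
  have e2 := card_B3 n k s hn hk hs
  have e3 := card_B4 n k s hn hs
  have hax : ((cset n k s).filter (fun S => ∃ p ∈ S, p.2 = 0)) = csetAx n k s := rfl
  rw [hax, e1] at h1
  omega

lemma main_nat (n k s : ℕ) (hn : 3 ≤ n) (hk : 1 ≤ k) (hs : 1 ≤ s) :
    (cset n k s).card + (cset (n-2) k s).card + (cset (n-2) (k-1) s).card
      = (cset (n-1) k (s-1)).card + (cset (n-1) k (s+1)).card
        + (cset (n-1) (k-1) (s-1)).card + (cset (n-1) (k-1) (s+1)).card := by
  have l1a := L1 n k s (by omega) hk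
  have l2 := L2 n k s (by omega) hk hs
  have l1b := L1 (n-1) k (s-1) (by omega) hk
  have e1 : n - 1 - 1 = n - 2 := by omega
  have e2 : s - 1 + 1 = s := by omega
  rw [e1, e2] at l1b
  omega

lemma cset_zero (n s : ℕ) : cset n 0 s = {∅} := by
  ext S
  simp only [mem_cset, Finset.mem_singleton, Finset.card_eq_zero]
  constructor
  · rintro ⟨rfl, -⟩; rfl
  · rintro rfl
    refine ⟨rfl, ?_, ?_, ?_⟩ <;> simp [IsChain, Set.Pairwise]

lemma chainA_eq (n : ℕ) (k s : ℤ) (hk : 0 ≤ k) (hs : 0 ≤ s) :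
    chainA n k s = (cset n k.toNat s.toNat).card := by
  rw [chainA, if_neg (by omega)]
  have he : ∀ S : Finset (ℕ × ℕ),
      (S.card = k.toNat ∧ (∀ p ∈ S, 1 ≤ p.1 + p.2 ∧ p.1 + p.2 ≤ n) ∧
        IsChain (· ≤ ·) (S : Set (ℕ × ℕ)) ∧ (∀ p ∈ S, (p.1 : ℤ) - (p.2 : ℤ) ≤ s))
      ↔ S ∈ cset n k.toNat s.toNat := by
    intro S
    rw [mem_cset]
    unfold OkP
    rw [Int.toNat_of_nonneg hs]
  calc Nat.card {S : Finset (ℕ × ℕ) // S.card = k.toNat ∧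
        (∀ p ∈ S, 1 ≤ p.1 + p.2 ∧ p.1 + p.2 ≤ n) ∧
        IsChain (· ≤ ·) (S : Set (ℕ × ℕ)) ∧ (∀ p ∈ S, (p.1 : ℤ) - (p.2 : ℤ) ≤ s)}
      = Nat.card {S : Finset (ℕ × ℕ) // S ∈ cset n k.toNat s.toNat} :=
        Nat.card_congr (Equiv.subtypeEquivRight he)
    _ = (cset n k.toNat s.toNat).card := Nat.card_eq_finsetCard _

lemma chainA_zero (n : ℕ) (s : ℤ) (hs : 0 ≤ s) : chainA n 0 s = 1 := by
  rw [chainA_eq n 0 s le_rfl hs]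
  simp [cset_zero]

lemma chainA_neg {n : ℕ} {k s : ℤ} (h : k < 0 ∨ s < 0) : chainA n k s = 0 := by
  rw [chainA, if_pos h]

end ChainAux
/-- For `n ≥ 3`, `s ≥ 1` and all `k`:
`a(n,k,s) = a(n-1,k,s-1) + a(n-1,k,s+1) - a(n-2,k,s)
  + a(n-1,k-1,s-1) + a(n-1,k-1,s+1) - a(n-2,k-1,s)`. -/
theorem chainA_simple_recursion (n : ℕ) (hn : 3 ≤ n) (s : ℤ) (hs : 1 ≤ s) (k : ℤ) :
    (chainA n k s : ℤ) =
      chainA (n - 1) k (s - 1) + chainA (n - 1) k (s + 1) - chainA (n - 2) k s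
      + chainA (n - 1) (k - 1) (s - 1) + chainA (n - 1) (k - 1) (s + 1)
      - chainA (n - 2) (k - 1) s := by
  rcases lt_trichotomy k 0 with hk | rfl | hk
  · rw [ChainAux.chainA_neg (Or.inl hk), ChainAux.chainA_neg (Or.inl hk),
      ChainAux.chainA_neg (Or.inl hk), ChainAux.chainA_neg (Or.inl hk),
      ChainAux.chainA_neg (Or.inl (by omega : k - 1 < 0)),
      ChainAux.chainA_neg (Or.inl (by omega : k - 1 < 0)),
      ChainAux.chainA_neg (Or.inl (by omega : k - 1 < 0))]
    ring
  · rw [ChainAux.chainA_zero n s (by omega), ChainAux.chainA_zero (n-1) (s-1) (by omega),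
      ChainAux.chainA_zero (n-1) (s+1) (by omega), ChainAux.chainA_zero (n-2) s (by omega),
      ChainAux.chainA_neg (Or.inl (by omega : (0:ℤ) - 1 < 0)),
      ChainAux.chainA_neg (Or.inl (by omega : (0:ℤ) - 1 < 0)),
      ChainAux.chainA_neg (Or.inl (by omega : (0:ℤ) - 1 < 0))]
    ring
  · have hk0 : (0:ℤ) ≤ k := by omega
    have hk1 : (0:ℤ) ≤ k - 1 := by omega
    have hs0 : (0:ℤ) ≤ s := by omega
    have hsm : (0:ℤ) ≤ s - 1 := by omega
    have hsp : (0:ℤ) ≤ s + 1 := by omega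
    rw [ChainAux.chainA_eq n k s hk0 hs0,
      ChainAux.chainA_eq (n-1) k (s-1) hk0 hsm,
      ChainAux.chainA_eq (n-1) k (s+1) hk0 hsp,
      ChainAux.chainA_eq (n-2) k s hk0 hs0,
      ChainAux.chainA_eq (n-1) (k-1) (s-1) hk1 hsm,
      ChainAux.chainA_eq (n-1) (k-1) (s+1) hk1 hsp,
      ChainAux.chainA_eq (n-2) (k-1) s hk1 hs0]
    have ek : (k - 1).toNat = k.toNat - 1 := by omega
    have esm : (s - 1).toNat = s.toNat - 1 := by omega
    have esp : (s + 1).toNat = s.toNat + 1 := by omega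
    rw [ek, esm, esp]
    have hmain := ChainAux.main_nat n k.toNat s.toNat hn (by omega) (by omega)
    omega
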